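/- Let A ∈ ℂ^{m×n} have a singular value decomposition A = Σ_{i=1}^n σ_i u_i v_i† with σ_1 ≥ σ_2 ≥ … ≥ σ_n ≥ 0 and v_1,…,v_n an orthonormal basis of ℂ^n. Let 1 ≤ r < n, let V_r ∈ ℂ^{n×r} be the matrix with columns v_1,…,v_r, and let Λ ∈ ℂ^{n×r} satisfy Λ†Λ = I_r. Then ‖A − AΛΛ†‖_F² − Σ_{i=r+1}^n σ_i² ≥ (σ_r² − σ_{r+1}²)·(r − ‖Λ†V_r‖_F²). (Note Σ_{i=r+1}^n σ_i² = ‖A − A_r‖_F², where A_r = Σ_{i=1}^r σ_i u_i v_i†.) -/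

import Mathlib

open Finset Matrix


private lemma zsq' (z : ℂ) : (z * star z).re = ‖z‖^2 := by
  rw [Complex.star_def, Complex.mul_conj]
  rw [Complex.normSq_eq_norm_sq]
  norm_cast

private lemma frob_row {a b : ℕ} (M : Matrix (Fin a) (Fin b) ℂ) (i : Fin a) :
    ∑ j, ‖M i j‖^2 = ((M * Mᴴ) i i).re := by
  rw [Matrix.mul_apply, Complex.re_sum]
  exact Finset.sum_congr rfl fun j _ => by rw [conjTranspose_apply, zsq']

private lemma frob_col {a b : ℕ} (M : Matrix (Fin a) (Fin b) ℂ) (j : Fin b) :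
    ∑ i, ‖M i j‖^2 = ((Mᴴ * M) j j).re := by
  rw [Matrix.mul_apply, Complex.re_sum]
  refine Finset.sum_congr rfl fun i _ => ?_
  rw [conjTranspose_apply, mul_comm, zsq']

private lemma sum_flt {n : ℕ} (r : ℕ) (h : r ≤ n) (f : Fin n → ℝ) :
    ∑ i ∈ univ.filter (fun i : Fin n => ¬ r ≤ i.val), f i
      = ∑ j : Fin r, f ⟨j.val, lt_of_lt_of_le j.isLt h⟩ := by
  refine Finset.sum_bij' (fun i hi => (⟨i.val, by simp at hi; omega⟩ : Fin r))
    (fun j _ => (⟨j.val, lt_of_lt_of_le j.isLt h⟩ : Fin n)) ?_ ?_ ?_ ?_ ?_ <;>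
    simp +contextual [Fin.ext_iff]

/-- projection loss versus subspace overlap. Let `A = U diag(σ) Vm†` be a
singular value decomposition (`U†U = 1`, `Vm` unitary so its columns `v_1,…,v_n` form an
orthonormal basis, `σ` nonincreasing and nonnegative) and let `Λ ∈ ℂ^{n×r}` have
orthonormal columns, with `1 ≤ r < n`. Then
`‖A − AΛΛ†‖_F² − ∑_{i=r+1}^n σ_i² ≥ (σ_r² − σ_{r+1}²)(r − ‖Λ†V_r‖_F²)`, where `V_r`
consists of the first `r` columns of `Vm` (indices are 1-based in this statement of the
inequality; `σ ⟨r-1,_⟩` and `σ ⟨r,_⟩` are the `r`-th and `(r+1)`-st singular values). -/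
theorem stmt12 (m n : ℕ) (A U : Matrix (Fin m) (Fin n) ℂ)
    (Vm : Matrix (Fin n) (Fin n) ℂ)
    (σ : Fin n → ℝ) (hσanti : Antitone σ) (hσnn : ∀ i, 0 ≤ σ i)
    (hU : Uᴴ * U = 1) (hV : Vm ∈ Matrix.unitaryGroup (Fin n) ℂ)
    (hA : A = U * Matrix.diagonal (fun i => ((σ i : ℝ) : ℂ)) * Vmᴴ)
    (r : ℕ) (hr1 : 1 ≤ r) (hrn : r < n)
    (Λ : Matrix (Fin n) (Fin r) ℂ) (hΛ : Λᴴ * Λ = 1)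
    (Vr : Matrix (Fin n) (Fin r) ℂ)
    (hVr : ∀ (i : Fin n) (j : Fin r), Vr i j = Vm i ⟨j.val, lt_trans j.isLt hrn⟩) :
    (σ ⟨r - 1, by omega⟩ ^ 2 - σ ⟨r, hrn⟩ ^ 2) *
        ((r : ℝ) - ∑ i, ∑ j, ‖(Λᴴ * Vr) i j‖ ^ 2) ≤
      (∑ i, ∑ j, ‖(A - A * Λ * Λᴴ) i j‖ ^ 2) -
        ∑ i ∈ univ.filter (fun i : Fin n => r ≤ i.val), σ i ^ 2 := by
  have hVV : Vm * Vmᴴ = 1 := by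
    have := Matrix.mem_unitaryGroup_iff.mp hV
    rwa [Matrix.star_eq_conjTranspose] at this
  have hVV' : Vmᴴ * Vm = 1 := by
    have := Matrix.mem_unitaryGroup_iff'.mp hV
    rwa [Matrix.star_eq_conjTranspose] at this
  set D : Matrix (Fin n) (Fin n) ℂ := Matrix.diagonal (fun i => ((σ i : ℝ) : ℂ)) with hD
  set P : Matrix (Fin n) (Fin n) ℂ := Λ * Λᴴ with hPdef
  have hPP : P * P = P := by
    rw [hPdef, Matrix.mul_assoc, ← Matrix.mul_assoc Λᴴ, hΛ, Matrix.one_mul]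
  have hPH : Pᴴ = P := by rw [hPdef, Matrix.conjTranspose_mul, Matrix.conjTranspose_conjTranspose]
  set Q : Matrix (Fin n) (Fin n) ℂ := 1 - P with hQdef
  have hQH : Qᴴ = Q := by rw [hQdef, Matrix.conjTranspose_sub, hPH, Matrix.conjTranspose_one]
  have hQQ : Q * Q = Q := by
    rw [hQdef, Matrix.sub_mul, Matrix.one_mul, Matrix.mul_sub, Matrix.mul_one,
      hPP]
    abel
  -- the overlaps t i = ‖Λᴴ v_i‖²
  set t : Fin n → ℝ := fun i => ∑ j, ‖(Λᴴ * Vm) j i‖^2 with htdef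
  have ht_alt : ∀ i, t i = ((Vmᴴ * P * Vm) i i).re := by
    intro i
    show ∑ j : Fin r, ‖(Λᴴ * Vm) j i‖^2 = _
    rw [frob_col]
    congr 2
    rw [Matrix.conjTranspose_mul, Matrix.conjTranspose_conjTranspose, hPdef]
    simp only [Matrix.mul_assoc]
  have ht_nonneg : ∀ i, 0 ≤ t i := fun i => Finset.sum_nonneg fun j _ => by positivity
  have h1t : ∀ i, 1 - t i = ∑ k, ‖(Q * Vm) k i‖^2 := by
    intro i
    rw [frob_col, Matrix.conjTranspose_mul, hQH]
    have h : Vmᴴ * Q * (Q * Vm) = Vmᴴ * Vm - Vmᴴ * P * Vm := by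
      rw [← Matrix.mul_assoc, Matrix.mul_assoc Vmᴴ Q Q, hQQ, hQdef, Matrix.mul_sub,
        Matrix.mul_one, Matrix.sub_mul]
    rw [h, Matrix.sub_apply, Complex.sub_re, ht_alt i]
    have h1 : ((Vmᴴ * Vm) i i).re = 1 := by rw [hVV', Matrix.one_apply_eq, Complex.one_re]
    rw [h1]
  have ht_le : ∀ i, t i ≤ 1 := by
    intro i
    have := h1t i
    have h2 : 0 ≤ ∑ k, ‖(Q * Vm) k i‖^2 := Finset.sum_nonneg fun k _ => by positivity
    linarith
  have hsum_t : ∑ i, t i = (r : ℝ) := by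
    rw [htdef]
    rw [Finset.sum_comm]
    have : ∀ j : Fin r, ∑ i, ‖(Λᴴ * Vm) j i‖^2 = 1 := by
      intro j
      rw [frob_row]
      have : Λᴴ * Vm * (Λᴴ * Vm)ᴴ = (1 : Matrix (Fin r) (Fin r) ℂ) := by
        rw [Matrix.conjTranspose_mul, Matrix.conjTranspose_conjTranspose, Matrix.mul_assoc,
          ← Matrix.mul_assoc Vm, hVV, Matrix.one_mul, hΛ]
      rw [this, Matrix.one_apply_eq, Complex.one_re]
    rw [Finset.sum_congr rfl fun j _ => this j]
    simp
  -- overlap with Vr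
  have hE : ∀ (i : Fin r) (j : Fin r),
      (Λᴴ * Vr) i j = (Λᴴ * Vm) i ⟨j.val, lt_trans j.isLt hrn⟩ := by
    intro i j
    rw [Matrix.mul_apply, Matrix.mul_apply]
    exact Finset.sum_congr rfl fun k _ => by rw [hVr]
  have hoverlap : ∑ i, ∑ j, ‖(Λᴴ * Vr) i j‖^2
      = ∑ j : Fin r, t ⟨j.val, lt_of_lt_of_le j.isLt (le_of_lt hrn)⟩ := by
    rw [Finset.sum_comm]
    refine Finset.sum_congr rfl fun j _ => ?_
    show _ = ∑ i : Fin r, ‖(Λᴴ * Vm) i ⟨j.val, _⟩‖^2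
    exact Finset.sum_congr rfl fun i _ => by rw [hE]
  -- Frobenius norm of the residual
  have hfrob : ∑ i, ∑ j, ‖(A - A * Λ * Λᴴ) i j‖^2 = ∑ i, σ i ^2 * (1 - t i) := by
    have hM : A - A * Λ * Λᴴ = U * (D * (Vmᴴ * Q)) := by
      rw [hA, hQdef, hPdef]
      simp only [Matrix.mul_sub, Matrix.mul_one, Matrix.mul_assoc, Matrix.sub_mul]
    rw [hM]
    have step1 : ∑ i, ∑ j, ‖(U * (D * (Vmᴴ * Q))) i j‖^2
        = ∑ i, ∑ j, ‖(D * (Vmᴴ * Q)) i j‖^2 := by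
      rw [Finset.sum_comm, Finset.sum_comm (s := univ) (t := univ)
        (f := fun i j => ‖(D * (Vmᴴ * Q)) i j‖^2)]
      refine Finset.sum_congr rfl fun j _ => ?_
      rw [frob_col, frob_col, Matrix.conjTranspose_mul, Matrix.mul_assoc,
        ← Matrix.mul_assoc Uᴴ, hU, Matrix.one_mul]
    rw [step1]
    refine Finset.sum_congr rfl fun i _ => ?_
    have : ∀ j, ‖(D * (Vmᴴ * Q)) i j‖^2 = σ i ^2 * ‖(Vmᴴ * Q) i j‖^2 := by
      intro j
      rw [hD, Matrix.diagonal_mul, norm_mul, mul_pow, Complex.norm_real,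
        Real.norm_eq_abs, sq_abs]
    rw [Finset.sum_congr rfl fun j _ => this j, ← Finset.mul_sum]
    have h : Vmᴴ * Q * (Vmᴴ * Q)ᴴ = (Q * Vm)ᴴ * (Q * Vm) := by
      rw [Matrix.conjTranspose_mul, Matrix.conjTranspose_mul, hQH,
        Matrix.conjTranspose_conjTranspose]
    rw [h1t i, frob_col, frob_row, h]
  -- finish with real arithmetic
  set c1 : ℝ := σ ⟨r - 1, by omega⟩ ^ 2 with hc1
  set c2 : ℝ := σ ⟨r, hrn⟩ ^ 2 with hc2
  rw [hfrob, hoverlap]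
  have hsplit := Finset.sum_filter_add_sum_filter_not univ (fun i : Fin n => r ≤ i.val)
    (fun i => σ i ^2 * (1 - t i))
  have hsplitT := Finset.sum_filter_add_sum_filter_not univ (fun i : Fin n => r ≤ i.val)
    (fun i => t i)
  set S := univ.filter (fun i : Fin n => r ≤ i.val) with hS
  set Sc := univ.filter (fun i : Fin n => ¬ r ≤ i.val) with hSc
  have hT0 : ∑ j : Fin r, t ⟨j.val, lt_of_lt_of_le j.isLt (le_of_lt hrn)⟩
      = ∑ i ∈ Sc, t i := (sum_flt r (le_of_lt hrn) t).symm
  have hcount : ∑ i ∈ Sc, (1 : ℝ) = r := by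
    rw [sum_flt r (le_of_lt hrn) (fun _ => (1:ℝ))]
    simp
  set T0 : ℝ := ∑ i ∈ Sc, t i with hT0def
  have hTS : ∑ i ∈ S, t i = (r : ℝ) - T0 := by
    have : ∑ i ∈ S, t i + T0 = (r : ℝ) := by rw [hT0def]; rw [← hsum_t]; exact hsplitT
    linarith
  -- bound 1
  have hb1 : c1 * ((r : ℝ) - T0) ≤ ∑ i ∈ Sc, σ i ^2 * (1 - t i) := by
    have h1 : ∀ i ∈ Sc, c1 * (1 - t i) ≤ σ i ^2 * (1 - t i) := by
      intro i hi
      have hilt : i.val < r := by simp [hSc] at hi; omega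
      have hle : σ ⟨r - 1, by omega⟩ ≤ σ i := hσanti (by rw [Fin.le_def]; simp; omega)
      have : c1 ≤ σ i ^2 := by rw [hc1]; exact pow_le_pow_left₀ (hσnn _) hle 2
      have h1t' : 0 ≤ 1 - t i := by linarith [ht_le i]
      exact mul_le_mul_of_nonneg_right this h1t'
    calc c1 * ((r : ℝ) - T0) = ∑ i ∈ Sc, c1 * (1 - t i) := by
          rw [← Finset.mul_sum, Finset.sum_sub_distrib, hcount]
      _ ≤ _ := Finset.sum_le_sum h1
  -- bound 2
  have hb2 : ∑ i ∈ S, σ i ^2 * t i ≤ c2 * ((r : ℝ) - T0) := by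
    have h1 : ∀ i ∈ S, σ i ^2 * t i ≤ c2 * t i := by
      intro i hi
      have hige : r ≤ i.val := by simp [hS] at hi; omega
      have hle : σ i ≤ σ ⟨r, hrn⟩ := hσanti (by rw [Fin.le_def]; simpa)
      have : σ i ^2 ≤ c2 := by rw [hc2]; exact pow_le_pow_left₀ (hσnn _) hle 2
      exact mul_le_mul_of_nonneg_right this (ht_nonneg i)
    calc ∑ i ∈ S, σ i ^2 * t i ≤ ∑ i ∈ S, c2 * t i := Finset.sum_le_sum h1
      _ = c2 * ((r : ℝ) - T0) := by rw [← Finset.mul_sum, hTS]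
  have hSeq : ∑ i ∈ S, σ i ^2 * (1 - t i) = ∑ i ∈ S, σ i ^2 - ∑ i ∈ S, σ i ^2 * t i := by
    rw [← Finset.sum_sub_distrib]
    exact Finset.sum_congr rfl fun i _ => by ring
  rw [hT0, ← hsplit]
  have hex : (c1 - c2) * ((r : ℝ) - T0) = c1 * ((r : ℝ) - T0) - c2 * ((r : ℝ) - T0) := by ring
  linarith [hb1, hb2, hSeq]
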